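/- Let B = {b_1, …, b_d} ⊂ ℤ^d be a basis of ℝ^d, and let A ⊂ ℤ^d be finite with B ∪ {0} ⊆ A ⊆ H(B ∪ {0}). Let u ∈ S(A,B) be nonzero and let u = a_1 + ⋯ + a_{N_A(u)} be any representation with all a_i ∈ A. Then: (i) no nonempty subsum ∑_{i∈I} a_i lies in Λ_B; (ii) no subsum ∑_{i∈I} a_i with |I| ≥ 2 is congruent modulo Λ_B to an element of A. Consequently S(A,B) is finite and K(A,B) ≤ k(Λ_A/Λ_B, A_B ∖ {0}), where A_B is the image of A in Λ_A/Λ_B. -/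

import Mathlib

open Pointwise MeasureTheory

noncomputable section

/-- Embedding of integer vectors into real vectors. -/
def emb (d : ℕ) : (Fin d → ℤ) → (Fin d → ℝ) := fun x i => (x i : ℝ)

/-- The `N`-fold sumset `NA` (with `0·A = {0}`). -/
def nfold (d : ℕ) (A : Set (Fin d → ℤ)) (N : ℕ) : Set (Fin d → ℤ) :=
  {x | ∃ f : Fin N → (Fin d → ℤ), (∀ i, f i ∈ A) ∧ x = ∑ i, f i}

/-- `P(A) = ⋃_{N ≥ 1} NA`. -/
def PA (d : ℕ) (A : Set (Fin d → ℤ)) : Set (Fin d → ℤ) :=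
  ⋃ N ∈ Set.Ici 1, nfold d A N

/-- The width `w(A) = max_{a₁,a₂ ∈ A} ‖a₁ - a₂‖_∞`. -/
def width (d : ℕ) (A : Finset (Fin d → ℤ)) : ℕ :=
  (A ×ˢ A).sup fun p => Finset.univ.sup fun i => (p.1 i - p.2 i).natAbs

/-- The convex hull `H(A)` in `ℝ^d`. -/
def hull (d : ℕ) (A : Finset (Fin d → ℤ)) : Set (Fin d → ℝ) :=
  convexHull ℝ (emb d '' ↑A)

/-- The cone `C_B = {∑_{b ∈ B} c_b b : c_b ≥ 0}` generated by `B`. -/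
def cone (d : ℕ) (B : Finset (Fin d → ℤ)) : Set (Fin d → ℝ) :=
  {x | ∃ c : (Fin d → ℤ) → ℝ, (∀ a, 0 ≤ c a) ∧ x = ∑ a ∈ B, c a • emb d a}

/-- The lattice (subgroup of `ℤ^d`) generated by a set `S`. -/
def latt (d : ℕ) (S : Set (Fin d → ℤ)) : AddSubgroup (Fin d → ℤ) :=
  AddSubgroup.closure S

/-- The exceptional set `E(A) = (C_A ∩ Λ_A) ∖ P(A)`, viewed inside `ℤ^d`. -/
def excep (d : ℕ) (A : Finset (Fin d → ℤ)) : Set (Fin d → ℤ) :=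
  {x | emb d x ∈ cone d A ∧ x ∈ latt d ↑A ∧ x ∉ PA d ↑A}

/-- The set of (lattice) extreme points of `H(A)`: those `p` with `emb p ∈ H(A)` such that
some `v ∈ span ℝ (A - A)`, `v ≠ 0`, satisfies `⟨v,x⟩ > ⟨v,p⟩` for all `x ∈ H(A) ∖ {p}`. -/
def exP (d : ℕ) (A : Finset (Fin d → ℤ)) : Set (Fin d → ℤ) :=
  {p | emb d p ∈ hull d A ∧
    ∃ v ∈ Submodule.span ℝ (emb d '' ((A : Set (Fin d → ℤ)) - (A : Set (Fin d → ℤ)))),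
      v ≠ (0 : Fin d → ℝ) ∧
      ∀ x ∈ hull d A, x ≠ emb d p → (∑ i, v i * emb d p i) < ∑ i, v i * x i}

/-- The structure equation
`NA = (N·H(A) ∩ (N·a₀ + Λ_{A-A})) ∖ ⋃_{a ∈ ex(H(A))} (N·a - E(a - A))`. -/
def structEq (d : ℕ) (A : Finset (Fin d → ℤ)) (a0 : Fin d → ℤ) (N : ℕ) : Prop :=
  emb d '' nfold d ↑A N =
    ((N : ℝ) • hull d A ∩
      emb d '' (({N • a0} : Set (Fin d → ℤ)) +
        (latt d ((A : Set (Fin d → ℤ)) - (A : Set (Fin d → ℤ))) : Set (Fin d → ℤ)))) \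
    ⋃ a ∈ exP d A,
      emb d '' (({N • a} : Set (Fin d → ℤ)) - excep d (A.image fun y => a - y))

/-- `H(A)` is a `d`-simplex: there is `B ⊆ A` with `|B| = d+1`, `B - B` spanning `ℝ^d`,
and `H(A) = H(B)`. -/
def IsSimplex (d : ℕ) (A : Finset (Fin d → ℤ)) : Prop :=
  ∃ B ⊆ A, B.card = d + 1 ∧
    Submodule.span ℝ (emb d '' ((B : Set (Fin d → ℤ)) - (B : Set (Fin d → ℤ)))) = ⊤ ∧
    hull d B = hull d A

/-- `N_A(v)`: the minimal positive `N` with `v ∈ NA`, and `N_A(0) = 0`. -/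
def NAfn (d : ℕ) (A : Set (Fin d → ℤ)) (v : Fin d → ℤ) : ℕ :=
  if v = 0 then 0 else sInf {N : ℕ | 0 < N ∧ v ∈ nfold d A N}

/-- The set `S(A,B)` of `B`-minimal elements. -/
def Smin (d : ℕ) (A B : Set (Fin d → ℤ)) : Set (Fin d → ℤ) :=
  {0} ∪ {u | u ∈ PA d A ∧ u ≠ 0 ∧
    ∀ f : Fin (NAfn d A u) → (Fin d → ℤ), (∀ i, f i ∈ A) → u = ∑ i, f i →
      ∀ i, f i ∉ B ∪ ({0} : Set (Fin d → ℤ))}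

/-- `k(G,H)`: the length of the longest sum of elements of `H` (with repetition) having no
nonempty subsum equal to `0` and no subsum of length `> 1` belonging to `H`. -/
def kConst {G : Type*} [AddCommGroup G] (H : Set G) : ℕ :=
  sSup {k : ℕ | ∃ h : Fin k → G, (∀ i, h i ∈ H) ∧
    (∀ I : Finset (Fin k), I.Nonempty → ∑ i ∈ I, h i ≠ 0) ∧
    (∀ I : Finset (Fin k), 2 ≤ I.card → ∑ i ∈ I, h i ∉ H)}

section Aux

variable {d : ℕ}

lemma emb_inj : Function.Injective (emb d) := fun x y h =>
  funext fun i => Int.cast_injective (congrFun h i)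

lemma emb_zero : emb d (0 : Fin d → ℤ) = 0 := by funext i; simp [emb]

lemma emb_sum {ι : Type*} (s : Finset ι) (f : ι → (Fin d → ℤ)) :
    emb d (∑ i ∈ s, f i) = ∑ i ∈ s, emb d (f i) := by
  funext j
  simp only [emb, Finset.sum_apply]
  push_cast
  rfl

lemma emb_sub (x y : Fin d → ℤ) : emb d (x - y) = emb d x - emb d y := by
  funext j; simp only [emb, Pi.sub_apply]; push_cast; ring

lemma emb_zsmul (m : ℤ) (v : Fin d → ℤ) : emb d (m • v) = (m : ℝ) • emb d v := by
  funext j; simp only [emb, Pi.smul_apply, smul_eq_mul]; push_cast; ring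

lemma mem_latt_iff {b : Fin d → (Fin d → ℤ)} {v : Fin d → ℤ} :
    v ∈ latt d (Set.range b) ↔ ∃ m : Fin d → ℤ, v = ∑ j, m j • b j := by
  constructor
  · intro hv
    induction hv using AddSubgroup.closure_induction with
    | mem x hx =>
      obtain ⟨j, rfl⟩ := hx
      exact ⟨Pi.single j 1, by simp [Pi.single_apply, ite_smul, Finset.sum_ite_eq']⟩
    | zero => exact ⟨0, by simp⟩
    | add x y hx hy ihx ihy =>
      obtain ⟨mx, rfl⟩ := ihx
      obtain ⟨my, rfl⟩ := ihy
      exact ⟨mx + my, by simp [add_smul, Finset.sum_add_distrib]⟩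
    | neg x hx ihx =>
      obtain ⟨mx, rfl⟩ := ihx
      exact ⟨-mx, by simp [neg_smul, Finset.sum_neg_distrib]⟩
  · rintro ⟨m, rfl⟩
    exact AddSubgroup.sum_mem _ fun j _ =>
      AddSubgroup.zsmul_mem _ (AddSubgroup.subset_closure (Set.mem_range_self j)) _

lemma exists_rep_of_multiset (s : Multiset (Fin d → ℤ)) {N : ℕ}
    (hN : Multiset.card s = N) :
    ∃ f : Fin N → (Fin d → ℤ), (∀ i, f i ∈ s) ∧ s.sum = ∑ i, f i ∧ ∀ x ∈ s, ∃ i, f i = x := by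
  have hlen : s.toList.length = N := by rw [Multiset.length_toList, hN]
  refine ⟨fun i => s.toList.get (Fin.cast hlen.symm i), fun i => ?_, ?_, fun x hx => ?_⟩
  · rw [← Multiset.mem_toList]; exact List.get_mem _ _
  · rw [← Multiset.sum_toList]
    conv_lhs => rw [← List.ofFn_get s.toList]
    rw [List.sum_ofFn]
    exact Fintype.sum_equiv (finCongr hlen) _ _ (fun i => rfl)
  · rw [← Multiset.mem_toList] at hx
    obtain ⟨n, hn⟩ := List.mem_iff_get.mp hx
    exact ⟨Fin.cast hlen n, by simpa using hn⟩

lemma nfold_finite (A : Finset (Fin d → ℤ)) (N : ℕ) : (nfold d ↑A N).Finite := by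
  apply Set.Finite.subset
    (Set.finite_range (fun f : Fin N → ↥A => ∑ i, ((f i : Fin d → ℤ))))
  rintro x ⟨f, hf, rfl⟩
  exact ⟨fun i => ⟨f i, hf i⟩, rfl⟩

lemma NAfn_pos_mem {A : Set (Fin d → ℤ)} {u : Fin d → ℤ} (hu : u ∈ PA d A) (hu0 : u ≠ 0) :
    0 < NAfn d A u ∧ u ∈ nfold d A (NAfn d A u) := by
  have hne : {N : ℕ | 0 < N ∧ u ∈ nfold d A N}.Nonempty := by
    simp only [PA, Set.mem_iUnion, Set.mem_Ici, exists_prop] at hu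
    obtain ⟨N, hN, h⟩ := hu
    exact ⟨N, hN, h⟩
  rw [NAfn, if_neg hu0]
  exact Nat.sInf_mem hne

lemma NAfn_le {A : Set (Fin d → ℤ)} {u : Fin d → ℤ} (hu0 : u ≠ 0) {N : ℕ}
    (h : u ∈ nfold d A N) : NAfn d A u ≤ N := by
  rw [NAfn, if_neg hu0]
  apply Nat.sInf_le
  refine ⟨?_, h⟩
  rcases Nat.eq_zero_or_pos N with rfl | hN
  · obtain ⟨f, -, rfl⟩ := h
    simp at hu0
  · exact hN

lemma coords_mem_hull (Bb : Module.Basis (Fin d) ℝ (Fin d → ℝ)) (b : Fin d → (Fin d → ℤ))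
    (hBb : ∀ i, Bb i = emb d (b i)) {x : Fin d → ℝ}
    (hx : x ∈ convexHull ℝ (emb d '' (Set.range b ∪ {0}))) :
    (∀ j, 0 ≤ Bb.repr x j) ∧ ∑ j, Bb.repr x j ≤ 1 := by
  classical
  have hsub : convexHull ℝ (emb d '' (Set.range b ∪ {0})) ⊆
      {y | (∀ j, 0 ≤ Bb.repr y j) ∧ ∑ j, Bb.repr y j ≤ 1} := by
    apply convexHull_min
    · rintro y ⟨z, hz | hz, rfl⟩
      · obtain ⟨j, rfl⟩ := hz
        rw [← hBb]
        constructor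
        · intro k
          rw [Module.Basis.repr_self, Finsupp.single_apply]
          split <;> norm_num
        · rw [Module.Basis.repr_self]
          simp [Finsupp.single_apply]
      · rw [Set.mem_singleton_iff] at hz
        subst hz
        rw [emb_zero]
        simp
    · intro y hy z hz p q hp hq hpq
      have hrepr : ∀ j, Bb.repr (p • y + q • z) j = p * Bb.repr y j + q * Bb.repr z j := by
        intro j
        simp [map_add, _root_.map_smul]
      constructor
      · intro j
        rw [hrepr j]
        exact add_nonneg (mul_nonneg hp (hy.1 j)) (mul_nonneg hq (hz.1 j))
      · calc ∑ j, Bb.repr (p • y + q • z) j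
            = p * ∑ j, Bb.repr y j + q * ∑ j, Bb.repr z j := by
              simp_rw [hrepr]
              rw [Finset.sum_add_distrib, Finset.mul_sum, Finset.mul_sum]
        _ ≤ p * 1 + q * 1 := by
              gcongr
              exacts [hy.2, hz.2]
        _ = 1 := by rw [mul_one, mul_one, hpq]
  exact hsub hx

lemma smin_contra {A : Finset (Fin d → ℤ)} {b : Fin d → (Fin d → ℤ)} {u : Fin d → ℤ}
    (hu : u ∈ Smin d ↑A (Set.range b)) (hu0 : u ≠ 0)
    (s : Multiset (Fin d → ℤ)) (hsA : ∀ x ∈ s, x ∈ (A : Set (Fin d → ℤ)))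
    (hsum : s.sum = u) (hcard : Multiset.card s ≤ NAfn d ↑A u)
    (hbad : Multiset.card s < NAfn d ↑A u ∨
      ∃ x ∈ s, x ∈ Set.range b ∪ ({0} : Set (Fin d → ℤ))) :
    False := by
  rcases hu with h0 | ⟨huPA, -, hmin⟩
  · exact hu0 h0
  obtain ⟨f, hfs, hfsum, -⟩ := exists_rep_of_multiset s rfl
  have hunf : u ∈ nfold d ↑A (Multiset.card s) :=
    ⟨f, fun i => hsA _ (hfs i), hsum.symm.trans hfsum⟩
  rcases hbad with hlt | ⟨x, hxs, hxB⟩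
  · have := NAfn_le hu0 hunf
    omega
  · have heq : Multiset.card s = NAfn d ↑A u := le_antisymm hcard (NAfn_le hu0 hunf)
    obtain ⟨g, hgA, hgsum, hgall⟩ := exists_rep_of_multiset s heq
    have hall := hmin g (fun i => hsA _ (hgA i)) (hsum.symm.trans hgsum)
    obtain ⟨i, hi⟩ := hgall x hxs
    exact hall i (hi ▸ hxB)

end Aux

section Parts

variable {d : ℕ}

lemma part_i (b : Fin d → (Fin d → ℤ)) (Bb : Module.Basis (Fin d) ℝ (Fin d → ℝ))
    (hBb : ∀ i, Bb i = emb d (b i)) (A : Finset (Fin d → ℤ))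
    (hBA : Set.range b ∪ {0} ⊆ (A : Set (Fin d → ℤ)))
    (hAH : emb d '' (A : Set (Fin d → ℤ)) ⊆ convexHull ℝ (emb d '' (Set.range b ∪ {0})))
    (u : Fin d → ℤ) (hu : u ∈ Smin d ↑A (Set.range b)) (hu0 : u ≠ 0)
    (a : Fin (NAfn d ↑A u) → (Fin d → ℤ)) (ha : ∀ i, a i ∈ A) (hrep : u = ∑ i, a i)
    (I : Finset (Fin (NAfn d ↑A u))) (hI : I.Nonempty) :
    (∑ i ∈ I, a i) ∉ latt d (Set.range b) := by
  classical
  intro hlat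
  obtain ⟨m, hm⟩ := mem_latt_iff.mp hlat
  have hc : ∀ i, (∀ j, 0 ≤ Bb.repr (emb d (a i)) j) ∧ ∑ j, Bb.repr (emb d (a i)) j ≤ 1 :=
    fun i => coords_mem_hull Bb b hBb (hAH (Set.mem_image_of_mem _ (ha i)))
  have hmj : ∀ j, (m j : ℝ) = ∑ i ∈ I, Bb.repr (emb d (a i)) j := by
    intro j
    have h2 : emb d (∑ i ∈ I, a i) = ∑ k, (m k : ℝ) • Bb k := by
      rw [hm, emb_sum]
      exact Finset.sum_congr rfl fun k _ => by rw [emb_zsmul, hBb]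
    have h3 := congrFun (Module.Basis.repr_sum_self Bb (fun k => (m k : ℝ))) j
    calc (m j : ℝ) = Bb.repr (∑ k, (m k : ℝ) • Bb k) j := h3.symm
      _ = Bb.repr (emb d (∑ i ∈ I, a i)) j := by rw [← h2]
      _ = ∑ i ∈ I, Bb.repr (emb d (a i)) j := by
          rw [emb_sum, map_sum]
          simp [Finsupp.finset_sum_apply]
  have hm0 : ∀ j, 0 ≤ m j := by
    intro j
    have : (0 : ℝ) ≤ (m j : ℝ) := by
      rw [hmj j]; exact Finset.sum_nonneg fun i _ => (hc i).1 j
    exact_mod_cast this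
  have hMle : ∑ j, m j ≤ (I.card : ℤ) := by
    have hr : (∑ j, (m j : ℝ)) ≤ (I.card : ℝ) := by
      calc ∑ j, (m j : ℝ) = ∑ i ∈ I, ∑ j, Bb.repr (emb d (a i)) j := by
            simp_rw [hmj]; rw [Finset.sum_comm]
        _ ≤ ∑ _i ∈ I, (1 : ℝ) := Finset.sum_le_sum fun i _ => (hc i).2
        _ = I.card := by simp
    exact_mod_cast hr
  set s : Multiset (Fin d → ℤ) :=
    Iᶜ.val.map a + Finset.univ.val.bind (fun j => Multiset.replicate (m j).toNat (b j))
    with hsdef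
  have hsA : ∀ x ∈ s, x ∈ (A : Set (Fin d → ℤ)) := by
    intro x hx
    rw [hsdef, Multiset.mem_add] at hx
    rcases hx with hx | hx
    · obtain ⟨i, -, rfl⟩ := Multiset.mem_map.mp hx; exact ha i
    · obtain ⟨j, -, hj⟩ := Multiset.mem_bind.mp hx
      rw [Multiset.eq_of_mem_replicate hj]
      exact hBA (Or.inl (Set.mem_range_self j))
  have hbsum : (Finset.univ.val.bind
      (fun j => Multiset.replicate (m j).toNat (b j))).sum = ∑ i ∈ I, a i := by
    rw [Multiset.sum_bind]
    have : (Finset.univ.val.map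
        (fun j => (Multiset.replicate (m j).toNat (b j)).sum)).sum
        = ∑ j, (m j).toNat • b j := by
      rw [Finset.sum]
      congr 1
      exact Multiset.map_congr rfl fun j _ => Multiset.sum_replicate _ _
    rw [this, hm]
    exact Finset.sum_congr rfl fun j _ => by
      rw [← natCast_zsmul, Int.toNat_of_nonneg (hm0 j)]
  have hssum : s.sum = u := by
    rw [hsdef, Multiset.sum_add, hbsum]
    have h1 : (Iᶜ.val.map a).sum = ∑ i ∈ Iᶜ, a i := rfl
    rw [h1, Finset.sum_compl_add_sum]
    exact hrep.symm
  have hbcard : Multiset.card (Finset.univ.val.bind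
      (fun j => Multiset.replicate (m j).toNat (b j))) = ∑ j, (m j).toNat := by
    rw [Multiset.card_bind]
    rw [Finset.sum]
    congr 1
    exact Multiset.map_congr rfl fun j _ => Multiset.card_replicate _ _
  have hscard : Multiset.card s = (NAfn d ↑A u - I.card) + ∑ j, (m j).toNat := by
    rw [hsdef, Multiset.card_add, Multiset.card_map, hbcard]
    congr 1
    show Iᶜ.card = _
    rw [Finset.card_compl, Fintype.card_fin]
  have htoN : ((∑ j, (m j).toNat : ℕ) : ℤ) = ∑ j, m j := by
    push_cast
    exact Finset.sum_congr rfl fun j _ => Int.toNat_of_nonneg (hm0 j)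
  have hIcard : I.card ≤ NAfn d ↑A u := by
    simpa using Finset.card_le_univ I
  have hMN : ∑ j, (m j).toNat ≤ I.card := by
    have h := hMle
    rw [← htoN] at h
    exact_mod_cast h
  have hcardle : Multiset.card s ≤ NAfn d ↑A u := by omega
  apply smin_contra hu hu0 s hsA hssum hcardle
  rcases lt_or_eq_of_le hcardle with hlt | heq
  · exact Or.inl hlt
  · right
    have hMpos : 0 < ∑ j, (m j).toNat := by
      have := hI.card_pos
      omega
    have hex : ∃ j, (m j).toNat ≠ 0 := by
      by_contra hno
      push_neg at hno
      rw [Finset.sum_eq_zero (fun j _ => hno j)] at hMpos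
      omega
    obtain ⟨j, hj⟩ := hex
    refine ⟨b j, ?_, Or.inl (Set.mem_range_self j)⟩
    rw [hsdef, Multiset.mem_add]
    right
    exact Multiset.mem_bind.mpr ⟨j, Finset.mem_univ j,
      Multiset.mem_replicate.mpr ⟨hj, rfl⟩⟩

end Parts

section PartII

variable {d : ℕ}

lemma part_ii (b : Fin d → (Fin d → ℤ)) (Bb : Module.Basis (Fin d) ℝ (Fin d → ℝ))
    (hBb : ∀ i, Bb i = emb d (b i)) (A : Finset (Fin d → ℤ))
    (hBA : Set.range b ∪ {0} ⊆ (A : Set (Fin d → ℤ)))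
    (hAH : emb d '' (A : Set (Fin d → ℤ)) ⊆ convexHull ℝ (emb d '' (Set.range b ∪ {0})))
    (u : Fin d → ℤ) (hu : u ∈ Smin d ↑A (Set.range b)) (hu0 : u ≠ 0)
    (a : Fin (NAfn d ↑A u) → (Fin d → ℤ)) (ha : ∀ i, a i ∈ A) (hrep : u = ∑ i, a i)
    (I : Finset (Fin (NAfn d ↑A u))) (hI2 : 2 ≤ I.card)
    (a' : Fin d → ℤ) (ha' : a' ∈ A) :
    (∑ i ∈ I, a i) - a' ∉ latt d (Set.range b) := by
  classical
  intro hlat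
  have hI : I.Nonempty := Finset.card_pos.mp (by omega)
  obtain ⟨m, hm⟩ := mem_latt_iff.mp hlat
  have hc : ∀ i, (∀ j, 0 ≤ Bb.repr (emb d (a i)) j) ∧ ∑ j, Bb.repr (emb d (a i)) j ≤ 1 :=
    fun i => coords_mem_hull Bb b hBb (hAH (Set.mem_image_of_mem _ (ha i)))
  have hc' : (∀ j, 0 ≤ Bb.repr (emb d a') j) ∧ ∑ j, Bb.repr (emb d a') j ≤ 1 :=
    coords_mem_hull Bb b hBb (hAH (Set.mem_image_of_mem _ ha'))
  have hc'le : ∀ j, Bb.repr (emb d a') j ≤ 1 := by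
    intro j
    calc Bb.repr (emb d a') j ≤ ∑ k, Bb.repr (emb d a') k :=
          Finset.single_le_sum (fun k _ => hc'.1 k) (Finset.mem_univ j)
      _ ≤ 1 := hc'.2
  have hmj : ∀ j, (m j : ℝ) =
      (∑ i ∈ I, Bb.repr (emb d (a i)) j) - Bb.repr (emb d a') j := by
    intro j
    have h2 : emb d ((∑ i ∈ I, a i) - a') = ∑ k, (m k : ℝ) • Bb k := by
      rw [hm, emb_sum]
      exact Finset.sum_congr rfl fun k _ => by rw [emb_zsmul, hBb]
    have h3 := congrFun (Module.Basis.repr_sum_self Bb (fun k => (m k : ℝ))) j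
    calc (m j : ℝ) = Bb.repr (∑ k, (m k : ℝ) • Bb k) j := h3.symm
      _ = Bb.repr (emb d ((∑ i ∈ I, a i) - a')) j := by rw [← h2]
      _ = (∑ i ∈ I, Bb.repr (emb d (a i)) j) - Bb.repr (emb d a') j := by
          rw [emb_sub, map_sub, emb_sum, map_sum]
          simp [Finsupp.finset_sum_apply]
  have hsumnn : ∀ j, (0:ℝ) ≤ ∑ i ∈ I, Bb.repr (emb d (a i)) j :=
    fun j => Finset.sum_nonneg fun i _ => (hc i).1 j
  by_cases hall : ∀ j, 0 ≤ m j
  · -- all coefficients nonnegative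
    have htoN : ((∑ j, (m j).toNat : ℕ) : ℤ) = ∑ j, m j := by
      push_cast
      exact Finset.sum_congr rfl fun j _ => Int.toNat_of_nonneg (hall j)
    have hsum_m : (∑ j, (m j : ℝ)) =
        (∑ i ∈ I, ∑ j, Bb.repr (emb d (a i)) j) - ∑ j, Bb.repr (emb d a') j := by
      simp_rw [hmj]
      rw [Finset.sum_sub_distrib, Finset.sum_comm]
    have hsI : (∑ i ∈ I, ∑ j, Bb.repr (emb d (a i)) j) ≤ (I.card : ℝ) := by
      calc (∑ i ∈ I, ∑ j, Bb.repr (emb d (a i)) j) ≤ ∑ _i ∈ I, (1:ℝ) :=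
            Finset.sum_le_sum fun i _ => (hc i).2
        _ = I.card := by simp
    have hσnn : (0:ℝ) ≤ ∑ j, Bb.repr (emb d a') j :=
      Finset.sum_nonneg fun j _ => hc'.1 j
    have hMle : ∑ j, m j ≤ (I.card : ℤ) := by
      have hr : (∑ j, (m j : ℝ)) ≤ (I.card : ℝ) := by rw [hsum_m]; linarith
      exact_mod_cast hr
    by_cases hMeq : ∑ j, m j = (I.card : ℤ)
    · -- then a' = 0, so ∑_I a i ∈ latt, contradicting part_i
      have hσ0 : ∑ j, Bb.repr (emb d a') j ≤ 0 := by
        have h1 : (∑ j, (m j : ℝ)) = (I.card : ℝ) := by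
          have : ((∑ j, m j : ℤ) : ℝ) = ((I.card : ℤ) : ℝ) := by exact_mod_cast hMeq
          push_cast at this
          convert this using 1 <;> push_cast <;> ring
        rw [hsum_m] at h1
        linarith
      have hz : ∀ j, Bb.repr (emb d a') j = 0 := by
        intro j
        have hle : Bb.repr (emb d a') j ≤ 0 := by
          calc Bb.repr (emb d a') j ≤ ∑ k, Bb.repr (emb d a') k :=
                Finset.single_le_sum (fun k _ => hc'.1 k) (Finset.mem_univ j)
            _ ≤ 0 := hσ0
        exact le_antisymm hle (hc'.1 j)
      have ha'0 : a' = 0 := by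
        apply emb_inj
        rw [emb_zero]
        have hrz : Bb.repr (emb d a') = 0 := by
          ext k; simpa using hz k
        exact Bb.repr.map_eq_zero_iff.mp hrz
      have hIin : (∑ i ∈ I, a i) ∈ latt d (Set.range b) := by
        have h5 := hlat
        rw [ha'0, sub_zero] at h5
        exact h5
      exact part_i b Bb hBb A hBA hAH u hu hu0 a ha hrep I hI hIin
    · -- M ≤ |I| - 1 : build replacement multiset
      have hMlt : ∑ j, m j < (I.card : ℤ) := lt_of_le_of_ne hMle hMeq
      set s : Multiset (Fin d → ℤ) :=
        a' ::ₘ (Iᶜ.val.map a +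
          Finset.univ.val.bind (fun j => Multiset.replicate (m j).toNat (b j)))
        with hsdef
      have hsA : ∀ x ∈ s, x ∈ (A : Set (Fin d → ℤ)) := by
        intro x hx
        rw [hsdef, Multiset.mem_cons] at hx
        rcases hx with rfl | hx
        · exact ha'
        rw [Multiset.mem_add] at hx
        rcases hx with hx | hx
        · obtain ⟨i, -, rfl⟩ := Multiset.mem_map.mp hx; exact ha i
        · obtain ⟨j, -, hj⟩ := Multiset.mem_bind.mp hx
          rw [Multiset.eq_of_mem_replicate hj]
          exact hBA (Or.inl (Set.mem_range_self j))
      have hbsum : (Finset.univ.val.bind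
          (fun j => Multiset.replicate (m j).toNat (b j))).sum
          = (∑ i ∈ I, a i) - a' := by
        rw [Multiset.sum_bind]
        have h4 : (Finset.univ.val.map
            (fun j => (Multiset.replicate (m j).toNat (b j)).sum)).sum
            = ∑ j, (m j).toNat • b j := by
          rw [Finset.sum]
          congr 1
          exact Multiset.map_congr rfl fun j _ => Multiset.sum_replicate _ _
        rw [h4, hm]
        exact Finset.sum_congr rfl fun j _ => by
          rw [← natCast_zsmul, Int.toNat_of_nonneg (hall j)]
      have hssum : s.sum = u := by
        rw [hsdef, Multiset.sum_cons, Multiset.sum_add, hbsum]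
        have h1 : (Iᶜ.val.map a).sum = ∑ i ∈ Iᶜ, a i := rfl
        have h5 : a' + (∑ i ∈ Iᶜ, a i + ((∑ i ∈ I, a i) - a'))
            = ∑ i ∈ Iᶜ, a i + ∑ i ∈ I, a i := by ring
        rw [h1, h5, Finset.sum_compl_add_sum]
        exact hrep.symm
      have hbcard : Multiset.card (Finset.univ.val.bind
          (fun j => Multiset.replicate (m j).toNat (b j))) = ∑ j, (m j).toNat := by
        rw [Multiset.card_bind, Finset.sum]
        congr 1
        exact Multiset.map_congr rfl fun j _ => Multiset.card_replicate _ _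
      have hscard : Multiset.card s
          = ((NAfn d ↑A u - I.card) + (∑ j, (m j).toNat)) + 1 := by
        rw [hsdef, Multiset.card_cons, Multiset.card_add, Multiset.card_map, hbcard]
        have h6 : Multiset.card Iᶜ.val = NAfn d ↑A u - I.card := by
          show Iᶜ.card = _
          rw [Finset.card_compl, Fintype.card_fin]
        rw [h6]
      have hIcard : I.card ≤ NAfn d ↑A u := by simpa using Finset.card_le_univ I
      have h7 : (∑ j, (m j).toNat) < I.card := by
        have h8 := hMlt
        rw [← htoN] at h8
        exact_mod_cast h8
      have hcardle : Multiset.card s ≤ NAfn d ↑A u := by omega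
      apply smin_contra hu hu0 s hsA hssum hcardle
      rcases lt_or_eq_of_le hcardle with hlt | heq
      · exact Or.inl hlt
      · right
        have hMpos : 0 < ∑ j, (m j).toNat := by omega
        have hex : ∃ j, (m j).toNat ≠ 0 := by
          by_contra hno
          push_neg at hno
          rw [Finset.sum_eq_zero (fun j _ => hno j)] at hMpos
          omega
        obtain ⟨j, hj⟩ := hex
        refine ⟨b j, ?_, Or.inl (Set.mem_range_self j)⟩
        rw [hsdef, Multiset.mem_cons]
        right
        rw [Multiset.mem_add]
        right
        exact Multiset.mem_bind.mpr ⟨j, Finset.mem_univ j,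
          Multiset.mem_replicate.mpr ⟨hj, rfl⟩⟩
  · -- some coefficient is -1, forcing a' = b j
    push_neg at hall
    obtain ⟨j, hj⟩ := hall
    have hjm : m j = -1 := by
      have h1 : (-1 : ℝ) ≤ (m j : ℝ) := by
        rw [hmj j]
        have h2 := hsumnn j
        have h3 := hc'le j
        linarith
      have h2 : (-1 : ℤ) ≤ m j := by exact_mod_cast h1
      omega
    have hcj1 : Bb.repr (emb d a') j = 1 := by
      have h1 := hmj j
      rw [hjm] at h1
      push_cast at h1
      have h2 := hsumnn j
      have h3 := hc'le j
      linarith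
    have hrepr_a' : Bb.repr (emb d a') = Finsupp.single j 1 := by
      ext k
      rw [Finsupp.single_apply]
      by_cases hkj : j = k
      · subst hkj; simpa using hcj1
      · rw [if_neg hkj]
        have hpair : Bb.repr (emb d a') j + Bb.repr (emb d a') k ≤ 1 := by
          have hsub : ({j, k} : Finset (Fin d)) ⊆ Finset.univ := Finset.subset_univ _
          have h9 := Finset.sum_le_sum_of_subset_of_nonneg hsub (fun x _ _ => hc'.1 x)
          rw [Finset.sum_pair hkj] at h9
          linarith [hc'.2]
        have h10 := hc'.1 k
        linarith [hcj1]
    have ha'bj : a' = b j := by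
      apply emb_inj
      have h11 : Bb.repr (emb d a') = Bb.repr (Bb j) := by
        rw [Module.Basis.repr_self, hrepr_a']
      have h12 := Bb.repr.injective h11
      rw [h12, hBb]
    have hIin : (∑ i ∈ I, a i) ∈ latt d (Set.range b) := by
      have hbj : a' ∈ latt d (Set.range b) := by
        rw [ha'bj]; exact AddSubgroup.subset_closure (Set.mem_range_self j)
      have h13 := AddSubgroup.add_mem _ hlat hbj
      simpa using h13
    exact part_i b Bb hBb A hBA hAH u hu hu0 a ha hrep I hI hIin

end PartII

section Dav

variable {d : ℕ}

lemma davenport {G : Type*} [AddCommGroup G] [Finite G] {k : ℕ} (h : Fin k → G)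
    (hz : ∀ I : Finset (Fin k), I.Nonempty → ∑ i ∈ I, h i ≠ 0) : k ≤ Nat.card G := by
  classical
  set s : Fin (k+1) → G :=
    fun j => ∑ i ∈ Finset.univ.filter (fun i : Fin k => (i:ℕ) < (j:ℕ)), h i with hs
  have key : ∀ j1 j2 : Fin (k+1), (j1:ℕ) < (j2:ℕ) → s j1 ≠ s j2 := by
    intro j1 j2 hlt heq
    have hsplit : s j2 = s j1 +
        ∑ i ∈ Finset.univ.filter (fun i : Fin k => (j1:ℕ) ≤ (i:ℕ) ∧ (i:ℕ) < (j2:ℕ)), h i := by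
      simp only [hs]
      rw [← Finset.sum_filter_add_sum_filter_not
        (Finset.univ.filter fun i : Fin k => (i:ℕ) < (j2:ℕ)) (fun i => (i:ℕ) < (j1:ℕ))]
      congr 1
      · apply Finset.sum_congr _ (fun _ _ => rfl)
        ext i
        simp only [Finset.mem_filter, Finset.mem_univ, true_and]
        omega
      · apply Finset.sum_congr _ (fun _ _ => rfl)
        ext i
        simp only [Finset.mem_filter, Finset.mem_univ, true_and]
        omega
    have hne : (Finset.univ.filter
        (fun i : Fin k => (j1:ℕ) ≤ (i:ℕ) ∧ (i:ℕ) < (j2:ℕ))).Nonempty := by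
      have hj1k : (j1:ℕ) < k := by
        have := j2.isLt
        omega
      exact ⟨⟨(j1:ℕ), hj1k⟩, by
        simp only [Finset.mem_filter, Finset.mem_univ, true_and]
        exact ⟨le_refl _, hlt⟩⟩
    apply hz _ hne
    have h2 : s j1 = s j1 + _ := heq.trans hsplit
    exact (left_eq_add.mp h2)
  have hinj : Function.Injective s := by
    intro x y hxy
    by_contra hne
    have hne' : (x:ℕ) ≠ (y:ℕ) := fun hv => hne (Fin.ext hv)
    rcases lt_or_gt_of_ne hne' with hlt | hlt
    · exact key x y hlt hxy
    · exact key y x hlt hxy.symm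
  have hle := Nat.card_le_card_of_injective s hinj
  simp only [Nat.card_eq_fintype_card, Fintype.card_fin] at hle
  omega

lemma quot_finite (hd : 0 < d) (b : Fin d → (Fin d → ℤ))
    (hb : LinearIndependent ℝ (fun i => emb d (b i))) :
    Finite ((Fin d → ℤ) ⧸ latt d (Set.range b)) := by
  classical
  haveI : Nonempty (Fin d) := ⟨⟨0, hd⟩⟩
  set embQ : (Fin d → ℤ) → (Fin d → ℚ) := fun x i => (x i : ℚ) with hembQ
  have hQinj : Function.Injective embQ := by
    intro x y hxy
    funext i
    have hxyi := congrFun hxy i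
    simp only [hembQ] at hxyi
    exact_mod_cast hxyi
  have hbQ : LinearIndependent ℚ (fun i => embQ (b i)) := by
    rw [Fintype.linearIndependent_iff]
    intro g hg i
    have hg' : ∑ i, (g i : ℝ) • emb d (b i) = 0 := by
      funext j
      have hgj := congrFun hg j
      simp only [Finset.sum_apply, Pi.smul_apply, smul_eq_mul, Pi.zero_apply, hembQ] at hgj
      simp only [Finset.sum_apply, Pi.smul_apply, smul_eq_mul, Pi.zero_apply, emb]
      exact_mod_cast hgj
    have := Fintype.linearIndependent_iff.mp hb (fun i => (g i : ℝ)) hg' i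
    exact_mod_cast this
  have hcard : Fintype.card (Fin d) = Module.finrank ℚ (Fin d → ℚ) := by
    simp [Module.finrank_fintype_fun_eq_card]
  set BbQ : Module.Basis (Fin d) ℚ (Fin d → ℚ) :=
    basisOfLinearIndependentOfCardEqFinrank hbQ hcard with hBbQdef
  have hBbQ : ∀ i, BbQ i = embQ (b i) :=
    fun i => congrFun (coe_basisOfLinearIndependentOfCardEqFinrank hbQ hcard) i
  have htor : ∀ x : Fin d → ℤ, ∃ n : ℕ, 0 < n ∧ n • x ∈ latt d (Set.range b) := by
    intro x
    set q : Fin d → ℚ := fun j => BbQ.repr (embQ x) j with hq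
    have hx : embQ x = ∑ j, q j • embQ (b j) := by
      have h0 := (BbQ.sum_repr (embQ x)).symm
      calc embQ x = ∑ j, BbQ.repr (embQ x) j • BbQ j := h0
        _ = ∑ j, q j • embQ (b j) :=
            Finset.sum_congr rfl fun j _ => by rw [hBbQ, hq]
    set n : ℕ := ∏ j, (q j).den with hn
    have hnpos : 0 < n := Finset.prod_pos (fun j _ => (q j).pos)
    have hmex : ∀ j : Fin d, ∃ mz : ℤ, (n : ℚ) * q j = mz := by
      intro j
      obtain ⟨c, hc⟩ := Finset.dvd_prod_of_mem (fun j => (q j).den) (Finset.mem_univ j)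
      refine ⟨(q j).num * c, ?_⟩
      rw [← hn] at hc
      rw [hc]
      push_cast
      rw [mul_comm ((q j).den : ℚ), mul_assoc, ← Rat.mul_den_eq_num]
      ring
    choose m hmeq using hmex
    refine ⟨n, hnpos, ?_⟩
    have hkey : (n : ℤ) • x = ∑ j, m j • b j := by
      apply hQinj
      funext k
      have hxk := congrFun hx k
      simp only [Finset.sum_apply, Pi.smul_apply, smul_eq_mul, hembQ] at hxk
      simp only [hembQ, Pi.smul_apply, Finset.sum_apply, smul_eq_mul]
      push_cast
      calc (n : ℚ) * (x k : ℚ) = (n : ℚ) * ∑ j, q j * (b j k : ℚ) := by rw [← hxk]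
        _ = ∑ j, ((n : ℚ) * q j) * (b j k : ℚ) := by rw [Finset.mul_sum]; ring_nf
        _ = ∑ j, (m j : ℚ) * (b j k : ℚ) :=
            Finset.sum_congr rfl fun j _ => by rw [hmeq j]
    rw [← natCast_zsmul, hkey]
    exact AddSubgroup.sum_mem _ fun j _ =>
      AddSubgroup.zsmul_mem _ (AddSubgroup.subset_closure (Set.mem_range_self j)) _
  haveI hfg1 : AddGroup.FG (Fin d → ℤ) := Module.Finite.iff_addGroup_fg.mp inferInstance
  haveI hfg2 : AddGroup.FG ((Fin d → ℤ) ⧸ latt d (Set.range b)) :=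
    AddGroup.fg_of_surjective (f := QuotientAddGroup.mk' (latt d (Set.range b)))
      (QuotientAddGroup.mk'_surjective _)
  apply AddCommGroup.finite_of_fg_torsion
  intro g
  induction g using QuotientAddGroup.induction_on with
  | _ z =>
    obtain ⟨n, hn, hmem⟩ := htor z
    rw [isOfFinAddOrder_iff_nsmul_eq_zero]
    refine ⟨n, hn, ?_⟩
    have h1 : (QuotientAddGroup.mk' (latt d (Set.range b))) (n • z) =
        n • (QuotientAddGroup.mk' (latt d (Set.range b))) z := map_nsmul _ _ _
    have h2 : (QuotientAddGroup.mk' (latt d (Set.range b))) (n • z) = 0 :=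
      (QuotientAddGroup.eq_zero_iff _).mpr hmem
    show n • (QuotientAddGroup.mk' (latt d (Set.range b))) z = 0
    rw [← h1, h2]

end Dav

/-- Subsum properties of representations of nonzero `B`-minimal elements, finiteness of
`S(A,B)`, and the bound `K(A,B) ≤ k(Λ_A/Λ_B, A_B ∖ {0})`. -/
theorem simplex_davenport_argument (d : ℕ) (b : Fin d → (Fin d → ℤ))
    (hb : LinearIndependent ℝ (fun i => emb d (b i)))
    (A : Finset (Fin d → ℤ))
    (hBA : Set.range b ∪ {0} ⊆ (A : Set (Fin d → ℤ)))
    (hAH : emb d '' (A : Set (Fin d → ℤ)) ⊆ convexHull ℝ (emb d '' (Set.range b ∪ {0}))) :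
    (∀ u ∈ Smin d ↑A (Set.range b), u ≠ 0 →
      ∀ a : Fin (NAfn d ↑A u) → (Fin d → ℤ), (∀ i, a i ∈ A) → u = ∑ i, a i →
        (∀ I : Finset (Fin (NAfn d ↑A u)), I.Nonempty →
            (∑ i ∈ I, a i) ∉ latt d (Set.range b)) ∧
        (∀ I : Finset (Fin (NAfn d ↑A u)), 2 ≤ I.card →
            ∀ a' ∈ A, (∑ i ∈ I, a i) - a' ∉ latt d (Set.range b))) ∧
    (Smin d ↑A (Set.range b)).Finite ∧
    sSup (NAfn d ↑A '' Smin d ↑A (Set.range b)) ≤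
      kConst (((QuotientAddGroup.mk '' (A : Set (Fin d → ℤ))) \ {0} :
        Set ((Fin d → ℤ) ⧸ latt d (Set.range b)))) := by
  classical
  rcases Nat.eq_zero_or_pos d with hd | hd
  · subst hd
    haveI hss : Subsingleton (Fin 0 → ℤ) := ⟨fun f g => funext fun i => i.elim0⟩
    haveI : Finite (Fin 0 → ℤ) := Finite.of_subsingleton
    refine ⟨?_, ?_, ?_⟩
    · intro u hu hu0
      exact absurd (Subsingleton.elim u 0) hu0
    · exact Set.toFinite _
    · apply csSup_le
      · exact ⟨NAfn 0 (↑A) 0, ⟨0, Or.inl rfl, rfl⟩⟩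
      · rintro n ⟨u, hu, rfl⟩
        have hu0 : u = 0 := Subsingleton.elim u 0
        rw [hu0, NAfn, if_pos rfl]
        exact Nat.zero_le _
  · haveI : Nonempty (Fin d) := ⟨⟨0, hd⟩⟩
    have hcardd : Fintype.card (Fin d) = Module.finrank ℝ (Fin d → ℝ) := by
      simp [Module.finrank_fintype_fun_eq_card]
    set Bb : Module.Basis (Fin d) ℝ (Fin d → ℝ) :=
      basisOfLinearIndependentOfCardEqFinrank hb hcardd with hBbdef
    have hBb : ∀ i, Bb i = emb d (b i) :=
      fun i => congrFun (coe_basisOfLinearIndependentOfCardEqFinrank hb hcardd) i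
    haveI hGfin : Finite ((Fin d → ℤ) ⧸ latt d (Set.range b)) := quot_finite hd b hb
    have P1 : ∀ u ∈ Smin d ↑A (Set.range b), u ≠ 0 →
        ∀ a : Fin (NAfn d ↑A u) → (Fin d → ℤ), (∀ i, a i ∈ A) → u = ∑ i, a i →
          (∀ I : Finset (Fin (NAfn d ↑A u)), I.Nonempty →
              (∑ i ∈ I, a i) ∉ latt d (Set.range b)) ∧
          (∀ I : Finset (Fin (NAfn d ↑A u)), 2 ≤ I.card →
              ∀ a' ∈ A, (∑ i ∈ I, a i) - a' ∉ latt d (Set.range b)) := by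
      intro u hu hu0 a ha hrep
      exact ⟨fun I hI => part_i b Bb hBb A hBA hAH u hu hu0 a ha hrep I hI,
             fun I hI2 a' ha' =>
               part_ii b Bb hBb A hBA hAH u hu hu0 a ha hrep I hI2 a' ha'⟩
    set HH : Set ((Fin d → ℤ) ⧸ latt d (Set.range b)) :=
      (QuotientAddGroup.mk '' (A : Set (Fin d → ℤ))) \ {0} with hHH
    set kset : Set ℕ := {k : ℕ | ∃ h : Fin k → ((Fin d → ℤ) ⧸ latt d (Set.range b)),
      (∀ i, h i ∈ HH) ∧
      (∀ I : Finset (Fin k), I.Nonempty → ∑ i ∈ I, h i ≠ 0) ∧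
      (∀ I : Finset (Fin k), 2 ≤ I.card → ∑ i ∈ I, h i ∉ HH)} with hkset
    have hkconst : kConst HH = sSup kset := rfl
    have key : ∀ u, u ∈ Smin d ↑A (Set.range b) → u ≠ 0 → NAfn d ↑A u ∈ kset := by
      intro u hu hu0
      have huPA : u ∈ PA d ↑A := by
        rcases hu with h0 | ⟨hPA, -, -⟩
        · exact absurd h0 hu0
        · exact hPA
      obtain ⟨hpos, hmem⟩ := NAfn_pos_mem huPA hu0
      obtain ⟨f, hf, hfsum⟩ := hmem
      have hP := P1 u hu hu0 f hf hfsum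
      refine ⟨fun i => QuotientAddGroup.mk (f i), fun i => ?_, fun I hI h0 => ?_,
        fun I hI2 hmem2 => ?_⟩
      · constructor
        · exact ⟨f i, hf i, rfl⟩
        · intro h0
          rw [Set.mem_singleton_iff] at h0
          have hfl : f i ∈ latt d (Set.range b) := (QuotientAddGroup.eq_zero_iff _).mp h0
          apply hP.1 {i} ⟨i, Finset.mem_singleton_self i⟩
          rwa [Finset.sum_singleton]
      · have hmk := map_sum (QuotientAddGroup.mk' (latt d (Set.range b))) f I
        simp only [QuotientAddGroup.mk'_apply] at hmk
        have hin : (∑ i ∈ I, f i) ∈ latt d (Set.range b) :=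
          (QuotientAddGroup.eq_zero_iff _).mp (hmk.trans h0)
        exact hP.1 I hI hin
      · obtain ⟨⟨a', ha', hq⟩, -⟩ := hmem2
        have hmk := map_sum (QuotientAddGroup.mk' (latt d (Set.range b))) f I
        simp only [QuotientAddGroup.mk'_apply] at hmk
        have heq2 : (QuotientAddGroup.mk (∑ i ∈ I, f i) :
            (Fin d → ℤ) ⧸ latt d (Set.range b)) = QuotientAddGroup.mk a' :=
          hmk.trans hq.symm
        have hsub : (∑ i ∈ I, f i) - a' ∈ latt d (Set.range b) :=
          (QuotientAddGroup.eq_iff_sub_mem).mp heq2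
        exact hP.2 I hI2 a' ha' hsub
    have hbdd : BddAbove kset := by
      refine ⟨Nat.card ((Fin d → ℤ) ⧸ latt d (Set.range b)), ?_⟩
      rintro k ⟨h, -, h2, -⟩
      exact davenport h h2
    refine ⟨P1, ?_, ?_⟩
    · apply Set.Finite.subset
        ((Set.finite_Iic (Nat.card ((Fin d → ℤ) ⧸ latt d (Set.range b)))).biUnion
          (fun N _ => nfold_finite A N))
      intro u hu
      rcases eq_or_ne u 0 with rfl | hu0
      · refine Set.mem_biUnion (Set.mem_Iic.mpr (Nat.zero_le _)) ?_
        exact ⟨fun i => i.elim0, fun i => i.elim0, by simp⟩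
      · have huPA : u ∈ PA d ↑A := by
          rcases hu with h0 | ⟨hPA, -, -⟩
          · exact absurd h0 hu0
          · exact hPA
        obtain ⟨hpos, hmem⟩ := NAfn_pos_mem huPA hu0
        obtain ⟨h, -, h2, -⟩ := key u hu hu0
        exact Set.mem_biUnion (Set.mem_Iic.mpr (davenport h h2)) hmem
    · rw [hkconst]
      apply csSup_le
      · exact ⟨NAfn d (↑A) 0, ⟨0, Or.inl rfl, rfl⟩⟩
      · rintro n ⟨u, hu, rfl⟩
        rcases eq_or_ne u 0 with rfl | hu0
        · rw [NAfn, if_pos rfl]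
          exact Nat.zero_le _
        · exact le_csSup hbdd (key u hu hu0)
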